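/- Let A = (Q, δ, QF) be a deterministic bottom-up tree automaton over Σ ∪ {x1,…,xk} (with x1,…,xk treated as constants) such that every state q ∈ Q satisfies q = δ(u_q) for some term u_q that is a subterm of some member of L(A). Then there exists a regular clause ψ_A over Σ extended by finitely many fresh constants, with a distinguished function symbol f of arity k, such that {w ∈ T(Σ, {x1,…,xk}) : ψ_A{w/f} is valid} = L(A); moreover ψ_A can be taken of the form (⋀_{e ∈ N} e) → (⋁_{e ∈ P} e) where N is a finite set of ground equations not containing f and P is a finite set of equations each with exactly one occurrence of f. -/

import Mathlib

namespace SyGuS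

/-- Terms over a ranked alphabet: symbols `F`, each of arity `ar f`. -/
inductive Tm (F : Type) (ar : F → ℕ) : Type
  | app (f : F) (args : Fin (ar f) → Tm F ar) : Tm F ar

/-- Arity function on `F ⊕ Fin k`: the `k` extra symbols are constants
(the variables `x₁,…,x_k`, treated as constants). -/
abbrev varAr {F : Type} (ar : F → ℕ) (k : ℕ) : F ⊕ Fin k → ℕ := Sum.elim ar fun _ => 0

/-- Arity function on `F ⊕ Unit`: the extra symbol is the function symbol `f` of arity `k`. -/
abbrev fAr {F : Type} (ar : F → ℕ) (k : ℕ) : F ⊕ Unit → ℕ := Sum.elim ar fun _ => k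

/-- A (nonempty) first-order structure for the ranked alphabet `(F, ar)`. -/
structure Str (F : Type) (ar : F → ℕ) : Type 1 where
  D : Type
  [nonemptyD : Nonempty D]
  interp : (f : F) → (Fin (ar f) → D) → D

attribute [instance] Str.nonemptyD

/-- Evaluation of a ground term in a structure. -/
def Tm.eval {F : Type} {ar : F → ℕ} (M : Str F ar) : Tm F ar → M.D
  | .app f args => M.interp f fun i => (args i).eval M

/-- First-order substitution: replace the variables `x₁,…,x_k` by terms. -/
def Tm.instVars {F : Type} {ar : F → ℕ} {k : ℕ} (σ : Fin k → Tm F ar) :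
    Tm (F ⊕ Fin k) (varAr ar k) → Tm F ar
  | .app (Sum.inl g) args => .app g fun i => Tm.instVars σ (args i)
  | .app (Sum.inr i) _ => σ i

/-- Second-order substitution `·{w/f}`: replace every application `f(s₁,…,s_k)` of the
distinguished symbol `f` by `w{s₁/x₁,…,s_k/x_k}`. -/
def Tm.soSubst {F : Type} {ar : F → ℕ} {k : ℕ} (w : Tm (F ⊕ Fin k) (varAr ar k)) :
    Tm (F ⊕ Unit) (fAr ar k) → Tm F ar
  | .app (Sum.inl g) args => .app g fun i => Tm.soSubst w (args i)
  | .app (Sum.inr _) args => Tm.instVars (fun i => Tm.soSubst w (args i)) w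

/-- Renaming of symbols along an arity-preserving map. -/
def Tm.rename {F G : Type} {arF : F → ℕ} {arG : G → ℕ} (h : F → G)
    (hh : ∀ f, arG (h f) = arF f) : Tm F arF → Tm G arG
  | .app f args => .app (h f) fun i => (args (Fin.cast (hh f) i)).rename h hh

/-- Equational consequence: `E ⊢ s = t` iff every structure satisfying all
equations of `E` also satisfies `s = t`. -/
def EqCons {F : Type} {ar : F → ℕ} (E : Set (Tm F ar × Tm F ar)) (s t : Tm F ar) : Prop :=
  ∀ M : Str F ar, (∀ e ∈ E, Tm.eval M e.1 = Tm.eval M e.2) → s.eval M = t.eval M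

/-- The subterm relation on terms. -/
inductive Tm.Subterm {F : Type} {ar : F → ℕ} : Tm F ar → Tm F ar → Prop
  | refl (t : Tm F ar) : Tm.Subterm t t
  | step {s : Tm F ar} (f : F) (args : Fin (ar f) → Tm F ar) (i : Fin (ar f)) :
      Tm.Subterm s (args i) → Tm.Subterm s (.app f args)

/-- A set of terms is subterm-closed if it contains all subterms of its members. -/
def SubtermClosed {F : Type} {ar : F → ℕ} (C : Set (Tm F ar)) : Prop :=
  ∀ t ∈ C, ∀ s, Tm.Subterm s t → s ∈ C

/-- Number of occurrences of the distinguished symbol `f` (the `Sum.inr` symbol) in a term. -/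
def Tm.countF {F : Type} {ar : F → ℕ} {k : ℕ} : Tm (F ⊕ Unit) (fAr ar k) → ℕ
  | .app (Sum.inl _) args => ∑ i, Tm.countF (args i)
  | .app (Sum.inr _) args => 1 + ∑ i, Tm.countF (args i)

/-- A literal: a (non-negated if `pos`, negated otherwise) equation between terms. -/
structure Lit (F : Type) (ar : F → ℕ) : Type where
  pos : Bool
  lhs : Tm F ar
  rhs : Tm F ar

def Lit.holds {F : Type} {ar : F → ℕ} (M : Str F ar) (l : Lit F ar) : Prop :=
  if l.pos then l.lhs.eval M = l.rhs.eval M else l.lhs.eval M ≠ l.rhs.eval M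

/-- A clause: a disjunction of (possibly negated) equations, ITE-free by construction. -/
abbrev Clause (F : Type) (ar : F → ℕ) := List (Lit F ar)

def Clause.holds {F : Type} {ar : F → ℕ} (M : Str F ar) (c : Clause F ar) : Prop :=
  ∃ l ∈ c, l.holds M

/-- A clause is valid if it holds in every nonempty structure. -/
def Clause.valid {F : Type} {ar : F → ℕ} (c : Clause F ar) : Prop :=
  ∀ M : Str F ar, c.holds M

/-- Number of occurrences of `f` in a literal (an equation). -/
def Lit.countF {F : Type} {ar : F → ℕ} {k : ℕ} (l : Lit (F ⊕ Unit) (fAr ar k)) : ℕ :=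
  l.lhs.countF + l.rhs.countF

/-- Case-1 regular clause: every equation has at most one occurrence of `f`,
and `f` occurs only in non-negated equations. -/
def Clause.Case1 {F : Type} {ar : F → ℕ} {k : ℕ} (c : Clause (F ⊕ Unit) (fAr ar k)) : Prop :=
  (∀ l ∈ c, l.countF ≤ 1) ∧ (∀ l ∈ c, l.pos = false → l.countF = 0)

/-- Case-2 regular clause: every equation has at most one occurrence of `f`, and `f`
occurs in exactly one negated equation of the clause and nowhere else. -/
def Clause.Case2 {F : Type} {ar : F → ℕ} {k : ℕ} (c : Clause (F ⊕ Unit) (fAr ar k)) : Prop :=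
  (∀ l ∈ c, l.countF ≤ 1) ∧ (∀ l ∈ c, l.pos = true → l.countF = 0) ∧
  (c.filter (fun l => l.pos = false ∧ l.countF ≠ 0)).length = 1

/-- A regular clause is one of case 1 or case 2. -/
def Clause.Regular {F : Type} {ar : F → ℕ} {k : ℕ} (c : Clause (F ⊕ Unit) (fAr ar k)) : Prop :=
  c.Case1 ∨ c.Case2

/-- Second-order substitution `·{w/f}` on literals. -/
def Lit.soSubst {F : Type} {ar : F → ℕ} {k : ℕ} (w : Tm (F ⊕ Fin k) (varAr ar k))
    (l : Lit (F ⊕ Unit) (fAr ar k)) : Lit F ar :=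
  ⟨l.pos, Tm.soSubst w l.lhs, Tm.soSubst w l.rhs⟩

/-- Second-order substitution `·{w/f}` on clauses. -/
def Clause.soSubst {F : Type} {ar : F → ℕ} {k : ℕ} (w : Tm (F ⊕ Fin k) (varAr ar k))
    (c : Clause (F ⊕ Unit) (fAr ar k)) : Clause F ar :=
  c.map (Lit.soSubst w)

/-- A regular-EUF formula: a finite conjunction of regular clauses. -/
structure RegEUF (F : Type) (ar : F → ℕ) (k : ℕ) : Type where
  clauses : List (Clause (F ⊕ Unit) (fAr ar k))
  regular : ∀ c ∈ clauses, c.Regular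

/-- `w` is a solution for a regular-EUF formula if every clause becomes valid
after substituting `w` for `f`. -/
def RegEUF.solves {F : Type} {ar : F → ℕ} {k : ℕ} (φ : RegEUF F ar k)
    (w : Tm (F ⊕ Fin k) (varAr ar k)) : Prop :=
  ∀ c ∈ φ.clauses, (c.soSubst w).valid

/-- Deterministic bottom-up tree automaton with a partial transition function. -/
structure DTA (F : Type) (ar : F → ℕ) : Type 1 where
  Q : Type
  [fintypeQ : Fintype Q]
  δ : (f : F) → (Fin (ar f) → Q) → Option Q
  final : Set Q

attribute [instance] DTA.fintypeQ

/-- Sequence a finite tuple of options. -/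
def finSeq {Q : Type} : {n : ℕ} → (Fin n → Option Q) → Option (Fin n → Q)
  | 0, _ => some (fun i => i.elim0)
  | _ + 1, f => (f 0).bind fun q => (finSeq fun i => f i.succ).map (Fin.cons q)

/-- The (partial) run of the automaton on a term: `δ` extended to terms. -/
def DTA.run {F : Type} {ar : F → ℕ} (A : DTA F ar) : Tm F ar → Option A.Q
  | .app f args => (finSeq fun i => A.run (args i)).bind fun qs => A.δ f qs

/-- The language accepted by the automaton. -/
def DTA.lang {F : Type} {ar : F → ℕ} (A : DTA F ar) : Set (Tm F ar) :=
  { t | ∃ q ∈ A.final, A.run t = some q }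

/-- A tree language is regular if it is the language of some deterministic
bottom-up tree automaton. -/
def IsRegularTreeLang {F : Type} {ar : F → ℕ} (L : Set (Tm F ar)) : Prop :=
  ∃ A : DTA F ar, L = A.lang

/-- Embedding of candidate expressions over `Σ ∪ {x₁,…,x_k}` into the terms over the
extension `Σ ∪ {c₁,…,c_c} ∪ {x₁,…,x_k}` of `Σ` by `c` fresh constants. -/
def embedW {F : Type} {ar : F → ℕ} {k c : ℕ} :
    Tm (F ⊕ Fin k) (varAr ar k) →
      Tm ((F ⊕ Fin c) ⊕ Fin k) (varAr (Sum.elim ar fun _ => 0) k) :=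
  Tm.rename (Sum.map Sum.inl id) (by rintro (g | i) <;> rfl)


/-! ### Auxiliary development for `automaton_to_regular_clause` -/

set_option linter.unusedSectionVars false

section AutAux
open Classical
variable {F : Type} [Fintype F] {ar : F → ℕ} {k : ℕ} (A : DTA (F ⊕ Fin k) (varAr ar k))

lemma finSeq_eq_some {Q : Type} : ∀ {n : ℕ} {f : Fin n → Option Q} {g : Fin n → Q},
    finSeq f = some g → ∀ i, f i = some (g i) := by
  intro n
  induction n with
  | zero => intro f g _ i; exact i.elim0
  | succ n ih =>
    intro f g h i
    simp only [finSeq, Option.bind_eq_some_iff, Option.map_eq_some_iff] at h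
    obtain ⟨q, hq, g', hg', rfl⟩ := h
    refine Fin.cases ?_ ?_ i
    · simpa using hq
    · intro j; simpa using ih hg' j

lemma finSeq_some {Q : Type} : ∀ {n : ℕ} (g : Fin n → Q),
    finSeq (fun i => some (g i)) = some g := by
  intro n
  induction n with
  | zero =>
    intro g; simp only [finSeq]
    congr 1; funext i; exact i.elim0
  | succ n ih =>
    intro g
    simp only [finSeq, Option.bind_eq_some_iff, ih, Option.map_some, Option.bind_some]
    congr 1
    exact Fin.cons_self_tail g

noncomputable def eQ : A.Q ≃ Fin (Fintype.card A.Q) := Fintype.equivFin A.Q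

/-- Constant term (over `Σ` plus fresh constants) for a state. -/
noncomputable def CST (q : A.Q) : Tm (F ⊕ Fin (Fintype.card A.Q + 1)) (Sum.elim ar fun _ => 0) :=
  .app (Sum.inr ((eQ A q).castSucc)) Fin.elim0

/-- Junk constant term. -/
noncomputable def CSTbot : Tm (F ⊕ Fin (Fintype.card A.Q + 1)) (Sum.elim ar fun _ => 0) :=
  .app (Sum.inr (Fin.last _)) Fin.elim0

noncomputable def CSTo : Option A.Q → Tm (F ⊕ Fin (Fintype.card A.Q + 1)) (Sum.elim ar fun _ => 0)
  | some q => CST A q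
  | none => CSTbot A

/-- Lifted constant terms, in the alphabet that also has the symbol `f`. -/
noncomputable def cstL (q : A.Q) :
    Tm ((F ⊕ Fin (Fintype.card A.Q + 1)) ⊕ Unit) (fAr (Sum.elim ar fun _ => 0) k) :=
  .app (Sum.inl (Sum.inr ((eQ A q).castSucc))) Fin.elim0

noncomputable def cstLbot :
    Tm ((F ⊕ Fin (Fintype.card A.Q + 1)) ⊕ Unit) (fAr (Sum.elim ar fun _ => 0) k) :=
  .app (Sum.inl (Sum.inr (Fin.last _))) Fin.elim0

noncomputable def cstLo :
    Option A.Q → Tm ((F ⊕ Fin (Fintype.card A.Q + 1)) ⊕ Unit) (fAr (Sum.elim ar fun _ => 0) k)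
  | some q => cstL A q
  | none => cstLbot A

/-- Run value of the automaton on the variable `xᵢ` (a constant of the automaton alphabet). -/
noncomputable def oX (i : Fin k) : Option A.Q := A.δ (Sum.inr i) (fun j => j.elim0)

/-- The negated literal recording a transition of the automaton. -/
noncomputable def negLit (g : F) (qs : Fin (ar g) → A.Q) (q' : A.Q) :
    Lit ((F ⊕ Fin (Fintype.card A.Q + 1)) ⊕ Unit) (fAr (Sum.elim ar fun _ => 0) k) :=
  ⟨false, .app (Sum.inl (Sum.inl g)) (fun i => cstL A (qs i)), cstL A q'⟩

/-- The positive literal for a final state. -/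
noncomputable def posLit (q : A.Q) :
    Lit ((F ⊕ Fin (Fintype.card A.Q + 1)) ⊕ Unit) (fAr (Sum.elim ar fun _ => 0) k) :=
  ⟨true, .app (Sum.inr ()) (fun i => cstLo A (oX A i)), cstL A q⟩

noncomputable def negLits :
    Clause ((F ⊕ Fin (Fintype.card A.Q + 1)) ⊕ Unit) (fAr (Sum.elim ar fun _ => 0) k) :=
  ((Finset.univ : Finset ((g : F) × (Fin (ar g) → A.Q))).toList).filterMap
    fun p => (A.δ (Sum.inl p.1) p.2).map (negLit A p.1 p.2)

noncomputable def posLits :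
    Clause ((F ⊕ Fin (Fintype.card A.Q + 1)) ⊕ Unit) (fAr (Sum.elim ar fun _ => 0) k) :=
  ((Finset.univ.filter (fun q => q ∈ A.final)).toList).map (posLit A)

noncomputable def psiA :
    Clause ((F ⊕ Fin (Fintype.card A.Q + 1)) ⊕ Unit) (fAr (Sum.elim ar fun _ => 0) k) :=
  negLits A ++ posLits A

/-- The canonical model. -/
noncomputable def M0 : Str (F ⊕ Fin (Fintype.card A.Q + 1)) (Sum.elim ar fun _ => 0) where
  D := Option A.Q
  nonemptyD := ⟨none⟩
  interp := fun g => match g with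
    | Sum.inl g => fun ds => (finSeq ds).bind (A.δ (Sum.inl g))
    | Sum.inr j => fun _ =>
        if h : (j : ℕ) < Fintype.card A.Q then some ((eQ A).symm ⟨j, h⟩) else none

lemma eval_CST (q : A.Q) : Tm.eval (M0 A) (CST A q) = some q := by
  simp only [Tm.eval, CST, M0]
  rw [dif_pos (show ((((eQ A) q).castSucc : Fin _) : ℕ) < Fintype.card A.Q from (eQ A q).isLt)]
  have : (⟨(((eQ A) q).castSucc : Fin _), (eQ A q).isLt⟩ : Fin (Fintype.card A.Q)) = eQ A q :=
    Fin.ext rfl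
  rw [this, (eQ A).symm_apply_apply]

lemma eval_CSTbot : Tm.eval (M0 A) (CSTbot A) = none := by
  simp [Tm.eval, CSTbot, M0]

lemma soSubst_cstL (w : Tm ((F ⊕ Fin (Fintype.card A.Q + 1)) ⊕ Fin k)
    (varAr (Sum.elim ar fun _ => 0) k)) (q : A.Q) :
    Tm.soSubst w (cstL A q) = CST A q := by
  simp only [Tm.soSubst, cstL, CST]
  congr 1
  funext i; exact i.elim0

lemma soSubst_cstLo (w : Tm ((F ⊕ Fin (Fintype.card A.Q + 1)) ⊕ Fin k)
    (varAr (Sum.elim ar fun _ => 0) k)) (o : Option A.Q) :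
    Tm.soSubst w (cstLo A o) = CSTo A o := by
  cases o with
  | some q => exact soSubst_cstL A w q
  | none =>
    simp only [Tm.soSubst, cstLo, cstLbot, CSTo, CSTbot]
    congr 1
    funext i; exact i.elim0

lemma soSubst_negLit (w : Tm ((F ⊕ Fin (Fintype.card A.Q + 1)) ⊕ Fin k)
    (varAr (Sum.elim ar fun _ => 0) k)) (g : F) (qs : Fin (ar g) → A.Q) (q' : A.Q) :
    Lit.soSubst w (negLit A g qs q') =
      ⟨false, .app (Sum.inl g) (fun i => CST A (qs i)), CST A q'⟩ := by
  simp only [Lit.soSubst, negLit]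
  refine congrArg₂ (Lit.mk false) ?_ (soSubst_cstL A w q')
  show Tm.soSubst w (.app (Sum.inl (Sum.inl g)) (fun i => cstL A (qs i))) = _
  simp only [Tm.soSubst]
  congr 1
  funext i
  exact soSubst_cstL A w (qs i)

lemma soSubst_posLit (w : Tm ((F ⊕ Fin (Fintype.card A.Q + 1)) ⊕ Fin k)
    (varAr (Sum.elim ar fun _ => 0) k)) (q : A.Q) :
    Lit.soSubst w (posLit A q) =
      ⟨true, Tm.instVars (fun i => CSTo A (oX A i)) w, CST A q⟩ := by
  simp only [Lit.soSubst, posLit]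
  refine congrArg₂ (Lit.mk true) ?_ (soSubst_cstL A w q)
  show Tm.soSubst w (.app (Sum.inr ()) (fun i => cstLo A (oX A i))) = _
  simp only [Tm.soSubst]
  congr 1
  funext i
  exact soSubst_cstLo A w (oX A i)

/-- In any model satisfying the transition equations, the substituted candidate
evaluates as its run. -/
lemma eval_run_sound (M : Str (F ⊕ Fin (Fintype.card A.Q + 1)) (Sum.elim ar fun _ => 0))
    (hneg : ∀ (g : F) (qs : Fin (ar g) → A.Q) (q' : A.Q), A.δ (Sum.inl g) qs = some q' →
      Tm.eval M (.app (Sum.inl g) (fun i => CST A (qs i))) = Tm.eval M (CST A q')) :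
    ∀ (t : Tm (F ⊕ Fin k) (varAr ar k)) (q : A.Q), A.run t = some q →
      Tm.eval M (Tm.instVars (fun i => CSTo A (oX A i)) (embedW t)) = Tm.eval M (CST A q) := by
  intro t
  induction t with
  | app f args ih =>
    cases f with
    | inl g =>
      intro q hq
      rw [DTA.run] at hq
      obtain ⟨qs, h1, h2⟩ := Option.bind_eq_some_iff.mp hq
      have harg : ∀ i, A.run (args i) = some (qs i) := finSeq_eq_some h1
      show Tm.eval M (.app (Sum.inl g)
        (fun i => Tm.instVars (fun j => CSTo A (oX A j)) (embedW (args i)))) = _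
      rw [← hneg g qs q h2]
      show M.interp (Sum.inl g) _ = M.interp (Sum.inl g) _
      congr 1
      funext i
      exact ih i (qs i) (harg i)
    | inr i =>
      intro q hq
      rw [DTA.run] at hq
      have : oX A i = some q := by
        rw [show (finSeq fun j => A.run (args j)) = some (fun j => j.elim0) from rfl,
          Option.bind_some] at hq
        exact hq
      show Tm.eval M (CSTo A (oX A i)) = _
      rw [this]
      rfl

/-- In the canonical model the substituted candidate evaluates to exactly its run value. -/
lemma eval_run_M0 :
    ∀ t : Tm (F ⊕ Fin k) (varAr ar k),
      Tm.eval (M0 A) (Tm.instVars (fun i => CSTo A (oX A i)) (embedW t)) = A.run t := by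
  intro t
  induction t with
  | app f args ih =>
    cases f with
    | inl g =>
      show Tm.eval (M0 A) (.app (Sum.inl g)
        (fun i => Tm.instVars (fun j => CSTo A (oX A j)) (embedW (args i)))) = _
      rw [DTA.run]
      show ((M0 A).interp (Sum.inl g)
        (fun i => Tm.eval (M0 A) (Tm.instVars (fun j => CSTo A (oX A j)) (embedW (args i))))) = _
      have : (fun i => Tm.eval (M0 A)
          (Tm.instVars (fun j => CSTo A (oX A j)) (embedW (args i)))) =
          fun i => A.run (args i) := funext fun i => ih i
      rw [show ((M0 A).interp (Sum.inl g)
          (fun i => Tm.eval (M0 A) (Tm.instVars (fun j => CSTo A (oX A j)) (embedW (args i))))) =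
          (finSeq fun i => Tm.eval (M0 A)
            (Tm.instVars (fun j => CSTo A (oX A j)) (embedW (args i)))).bind
            (A.δ (Sum.inl g)) from rfl, this]
    | inr i =>
      show Tm.eval (M0 A) (CSTo A (oX A i)) = _
      rw [DTA.run]
      have hrun : (finSeq fun j => A.run (args j)).bind (A.δ (Sum.inr i)) = oX A i := by
        rw [show (finSeq fun j => A.run (args j)) = some (fun j => j.elim0) from rfl,
          Option.bind_some]
        rfl
      rw [hrun]
      cases h : oX A i with
      | some q => exact eval_CST A q
      | none => exact eval_CSTbot A

lemma M0_hneg : ∀ (g : F) (qs : Fin (ar g) → A.Q) (q' : A.Q), A.δ (Sum.inl g) qs = some q' →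
    Tm.eval (M0 A) (.app (Sum.inl g) (fun i => CST A (qs i))) = Tm.eval (M0 A) (CST A q') := by
  intro g qs q' h
  show ((M0 A).interp (Sum.inl g) (fun i => Tm.eval (M0 A) (CST A (qs i)))) = _
  rw [show ((M0 A).interp (Sum.inl g) (fun i => Tm.eval (M0 A) (CST A (qs i)))) =
    (finSeq fun i => Tm.eval (M0 A) (CST A (qs i))).bind (A.δ (Sum.inl g)) from rfl]
  rw [show (fun i => Tm.eval (M0 A) (CST A (qs i))) = fun i => some (qs i) from
    funext fun i => eval_CST A (qs i)]
  rw [finSeq_some, eval_CST]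
  exact h

lemma countF_cstL (q : A.Q) : Tm.countF (k := k) (cstL A q) = 0 := by
  simp [cstL, Tm.countF]

lemma countF_cstLo (o : Option A.Q) : Tm.countF (k := k) (cstLo A o) = 0 := by
  cases o with
  | some q => exact countF_cstL A q
  | none => simp [cstLo, cstLbot, Tm.countF]

lemma countF_negLit (g : F) (qs : Fin (ar g) → A.Q) (q' : A.Q) :
    Lit.countF (k := k) (negLit A g qs q') = 0 := by
  simp only [Lit.countF, negLit]
  rw [show Tm.countF (k := k) (.app (Sum.inl (Sum.inl g)) (fun i => cstL A (qs i))) =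
    ∑ i, Tm.countF (cstL A (qs i)) from rfl]
  simp [countF_cstL]

lemma countF_posLit (q : A.Q) : Lit.countF (k := k) (posLit A q) = 1 := by
  simp only [Lit.countF, posLit]
  rw [show Tm.countF (k := k) (.app (Sum.inr ()) (fun i => cstLo A (oX A i))) =
    1 + ∑ i, Tm.countF (cstLo A (oX A i)) from rfl]
  simp [countF_cstLo, countF_cstL]

lemma mem_psiA {l} (hl : l ∈ psiA (k := k) A) :
    (∃ (g : F) (qs : Fin (ar g) → A.Q) (q' : A.Q),
        A.δ (Sum.inl g) qs = some q' ∧ l = negLit A g qs q') ∨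
    (∃ q ∈ A.final, l = posLit A q) := by
  rcases List.mem_append.mp hl with h | h
  · left
    obtain ⟨p, _, hp⟩ := List.mem_filterMap.mp h
    obtain ⟨q', hq', rfl⟩ := Option.map_eq_some_iff.mp hp
    exact ⟨p.1, p.2, q', hq', rfl⟩
  · right
    obtain ⟨q, hq, rfl⟩ := List.mem_map.mp h
    exact ⟨q, (Finset.mem_filter.mp (Finset.mem_toList.mp hq)).2, rfl⟩

end AutAux

/-- **Lemma `aut_to_formula`.**  Let `A = (Q, δ, Q_F)` be a deterministic
bottom-up tree automaton over `Σ ∪ {x₁,…,x_k}` such that every state is `δ(u_q)` for some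
term `u_q` that is a subterm of a member of `L(A)`.  Then there is a regular clause `ψ_A`
over `Σ` extended by finitely many fresh constants, with a distinguished function symbol
`f` of arity `k`, of the form `(⋀_{e ∈ N} e) → (⋁_{e ∈ P} e)` (negated equations `N` not
containing `f`, positive equations `P` each with exactly one occurrence of `f`), whose
solution set `{w ∈ T(Σ,{x₁,…,x_k}) : ψ_A{w/f} valid}` is exactly `L(A)`. -/
theorem automaton_to_regular_clause {F : Type} [Fintype F] (ar : F → ℕ) (k : ℕ)
    (A : DTA (F ⊕ Fin k) (varAr ar k))
    (hQ : ∀ q : A.Q, ∃ u, A.run u = some q ∧ ∃ t ∈ A.lang, u.Subterm t) :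
    ∃ (c : ℕ) (ψ : Clause ((F ⊕ Fin c) ⊕ Unit) (fAr (Sum.elim ar fun _ => 0) k)),
      ψ.Case1 ∧
      (∀ l ∈ ψ, l.pos = false → l.countF = 0) ∧
      (∀ l ∈ ψ, l.pos = true → l.countF = 1) ∧
      {w : Tm (F ⊕ Fin k) (varAr ar k) | (ψ.soSubst (embedW w)).valid} = A.lang := by
  classical
  refine ⟨Fintype.card A.Q + 1, psiA A, ?_, ?_, ?_, ?_⟩
  case refine_2 =>
    intro l hl hp
    rcases mem_psiA A hl with ⟨g, qs, q', _, rfl⟩ | ⟨q, _, rfl⟩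
    · exact countF_negLit A g qs q'
    · simp [posLit] at hp
  case refine_3 =>
    intro l hl hp
    rcases mem_psiA A hl with ⟨g, qs, q', _, rfl⟩ | ⟨q, _, rfl⟩
    · simp [negLit] at hp
    · exact countF_posLit A q
  case refine_1 =>
    constructor
    · intro l hl
      rcases mem_psiA A hl with ⟨g, qs, q', _, rfl⟩ | ⟨q, _, rfl⟩
      · exact (countF_negLit A g qs q').trans_le (Nat.zero_le 1)
      · exact le_of_eq (countF_posLit A q)
    · intro l hl hp
      rcases mem_psiA A hl with ⟨g, qs, q', _, rfl⟩ | ⟨q, _, rfl⟩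
      · exact countF_negLit A g qs q'
      · simp [posLit] at hp
  case refine_4 =>
    ext w
    simp only [Set.mem_setOf_eq]
    constructor
    · intro hval
      obtain ⟨l, hl, hh⟩ := hval (M0 A)
      simp only [Clause.soSubst] at hl
      obtain ⟨l0, hl0, rfl⟩ := List.mem_map.mp hl
      rcases mem_psiA A hl0 with ⟨g, qs, q', hδ, rfl⟩ | ⟨q, hq, rfl⟩
      · exfalso
        rw [soSubst_negLit] at hh
        simp only [Lit.holds] at hh
        exact hh (M0_hneg A g qs q' hδ)
      · rw [soSubst_posLit] at hh
        simp only [Lit.holds] at hh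
        rw [show ((⟨true, Tm.instVars (fun i => CSTo A (oX A i)) (embedW w), CST A q⟩ :
          Lit _ _).lhs).eval (M0 A) = A.run w from eval_run_M0 A w] at hh
        rw [show ((⟨true, Tm.instVars (fun i => CSTo A (oX A i)) (embedW w), CST A q⟩ :
          Lit _ _).rhs).eval (M0 A) = some q from eval_CST A q] at hh
        simp only [if_true] at hh
        exact ⟨q, hq, hh⟩
    · intro hw M
      obtain ⟨qf, hqf, hrun⟩ := hw
      by_cases hN : ∀ (g : F) (qs : Fin (ar g) → A.Q) (q' : A.Q),
          A.δ (Sum.inl g) qs = some q' →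
          Tm.eval M (.app (Sum.inl g) (fun i => CST A (qs i))) = Tm.eval M (CST A q')
      · refine ⟨Lit.soSubst (embedW w) (posLit A qf), ?_, ?_⟩
        · exact List.mem_map_of_mem (List.mem_append.mpr (Or.inr
            (List.mem_map_of_mem (Finset.mem_toList.mpr
              (Finset.mem_filter.mpr ⟨Finset.mem_univ _, hqf⟩)))))
        · rw [soSubst_posLit]
          simp only [Lit.holds, if_true]
          exact eval_run_sound A M hN w qf hrun
      · push_neg at hN
        obtain ⟨g, qs, q', hδ, hne⟩ := hN
        refine ⟨Lit.soSubst (embedW w) (negLit A g qs q'), ?_, ?_⟩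
        · refine List.mem_map_of_mem (List.mem_append.mpr (Or.inl
            (List.mem_filterMap.mpr ⟨⟨g, qs⟩, Finset.mem_toList.mpr (Finset.mem_univ _), ?_⟩)))
          rw [hδ]; rfl
        · rw [soSubst_negLit]
          simp only [Lit.holds]
          exact hne

end SyGuS
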